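/- arXiv:1810.10208 — 4 statements merged into one kernel-verified Lean document; each statement's English description precedes it below -/
import Mathlib

section
/- Let H be a separable real Hilbert space with orthonormal basis (e_i). Set v = S_{1,1} and w = Σ_{n≥1} (1/n²) S_{n,n+1} (a Hilbert–Schmidt operator). Then for every k ∈ ℕ, the operator S_{1,k} belongs to the Lie algebra generated by v and w; in particular this Lie algebra is infinite dimensional. -/
set_option maxHeartbeats 2000000

attribute [local instance 100] LieRing.ofAssociativeRing


/-- For `v = S_{1,1}` and `w = Σ_{n ≥ 1} (1/n²) S_{n,n+1}`, every `S_{1,k}` (`k ≥ 1`) belongs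
to the Lie algebra generated by `v` and `w` (inside the bounded operators, with bracket
`[X,Y] = XY − YX`); in particular this Lie algebra is infinite dimensional. -/
theorem stmt3 {H : Type*} [NormedAddCommGroup H] [InnerProductSpace ℝ H] [CompleteSpace H]
    (e : HilbertBasis ℕ ℝ H)
    (E : ℕ → ℕ → H →L[ℝ] H)
    (hE : ∀ i j (x : H), E i j x = (inner ℝ x (e j) : ℝ) • e i)
    (S : ℕ → ℕ → H →L[ℝ] H)
    (hS : ∀ i j, S i j = E i j + E j i)
    (v w : H →L[ℝ] H)
    (hv : v = S 1 1)
    (hw : w = ∑' n : ℕ, (1 / ((n : ℝ) + 1) ^ 2) • S (n + 1) (n + 2)) :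
    (∀ k : ℕ, 1 ≤ k → S 1 k ∈ LieSubalgebra.lieSpan ℝ (H →L[ℝ] H) {v, w}) ∧
      ¬ Module.Finite ℝ (LieSubalgebra.lieSpan ℝ (H →L[ℝ] H) {v, w}) := by
  have horth := orthonormal_iff_ite.mp e.orthonormal
  -- multiplication rule for the E's
  have hmul : ∀ i j k l, E i j * E k l = if j = k then E i l else 0 := by
    intro i j k l
    ext x
    rw [ContinuousLinearMap.mul_apply, hE, hE, real_inner_smul_left, horth]
    rcases eq_or_ne j k with h | h
    · rw [if_pos h.symm, if_pos h, mul_one]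
      exact (hE i l x).symm
    · rw [if_neg (Ne.symm h), if_neg h, mul_zero, zero_smul]
      simp
  have hSE : ∀ a b c d, ⁅S a b, E c d⁆ =
      ((if b = c then E a d else 0) + (if a = c then E b d else 0))
      - ((if d = a then E c b else 0) + (if d = b then E c a else 0)) := by
    intro a b c d
    simp only [hS, Ring.lie_def, add_mul, mul_add, hmul]
  have hSS : ∀ a b c d, ⁅S a b, S c d⁆ = ⁅S a b, E c d⁆ + ⁅S a b, E d c⁆ := by
    intro a b c d; rw [hS c d, lie_add]
  have hout : ∀ p, 2 ≤ p → ⁅S 1 1, E 1 p - E p 1⁆ = (2:ℝ) • S 1 p := by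
    intro p hp
    rw [lie_sub, hSE, hSE]
    split_ifs <;> try omega
    all_goals
      rw [hS]
      simp only [smul_add, two_smul]
      abel
  -- pointwise double-bracket computations
  have P1 : ∀ n : ℕ, ⁅S 1 1, ⁅S 1 1, S (n+1) (n+2)⁆⁆ =
      if n = 0 then (4:ℝ) • S 1 2 else 0 := by
    intro n
    rcases eq_or_ne n 0 with h | h
    · subst h
      rw [if_pos rfl]
      have e1 : ⁅S 1 1, S (0+1) (0+2)⁆ = (E 1 2 - E 2 1) + (E 1 2 - E 2 1) := by
        rw [hSS, hSE, hSE]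
        split_ifs <;> try omega
        abel
      rw [e1, lie_add, hout 2 le_rfl, ← add_smul]
      norm_num
    · rw [if_neg h]
      have e1 : ⁅S 1 1, S (n+1) (n+2)⁆ = 0 := by
        rw [hSS, hSE, hSE]
        split_ifs <;> try omega
        abel
      rw [e1, lie_zero]
  have P2 : ∀ n : ℕ, ⁅S 1 1, ⁅S 1 2, S (n+1) (n+2)⁆⁆ =
      if n = 1 then (2:ℝ) • S 1 3 else 0 := by
    intro n
    rcases eq_or_ne n 1 with h | h
    · subst h
      rw [if_pos rfl]
      have e1 : ⁅S 1 2, S (1+1) (1+2)⁆ = E 1 3 - E 3 1 := by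
        rw [hSS, hSE, hSE]
        split_ifs <;> try omega
        abel
      rw [e1, hout 3 (by omega)]
    · rw [if_neg h]
      rcases eq_or_ne n 0 with h0 | h0
      · subst h0
        have e1 : ⁅S 1 2, S (0+1) (0+2)⁆ = 0 := by
          rw [show S (0+1) (0+2) = S 1 2 by norm_num, lie_self]
        rw [e1, lie_zero]
      · have e1 : ⁅S 1 2, S (n+1) (n+2)⁆ = 0 := by
          rw [hSS, hSE, hSE]
          split_ifs <;> try omega
          abel
        rw [e1, lie_zero]
  have P3 : ∀ m n : ℕ, ⁅S 1 1, ⁅S 1 (m+3), S (n+1) (n+2)⁆⁆ =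
      if n = m + 2 then (2:ℝ) • S 1 (m+4) else if n = m + 1 then (2:ℝ) • S 1 (m+2) else 0 := by
    intro m n
    rcases eq_or_ne n (m+2) with h | h
    · subst h
      rw [if_pos rfl]
      have e1 : ⁅S 1 (m+3), S (m+2+1) (m+2+2)⁆ = E 1 (m+4) - E (m+4) 1 := by
        rw [hSS, hSE, hSE]
        split_ifs <;> try omega
        abel
      rw [e1, hout _ (by omega)]
    · rcases eq_or_ne n (m+1) with h2 | h2
      · subst h2
        rw [if_neg h, if_pos rfl]
        have e1 : ⁅S 1 (m+3), S (m+1+1) (m+1+2)⁆ = E 1 (m+2) - E (m+2) 1 := by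
          rw [hSS, hSE, hSE]
          split_ifs <;> try omega
          abel
        rw [e1, hout _ (by omega)]
      · rw [if_neg h, if_neg h2]
        rcases eq_or_ne n 0 with h0 | h0
        · subst h0
          have e1 : ⁅S 1 (m+3), S (0+1) (0+2)⁆ = E (m+3) 2 - E 2 (m+3) := by
            rw [hSS, hSE, hSE]
            split_ifs <;> try omega
            abel
          rw [e1, lie_sub, hSE, hSE]
          split_ifs <;> try omega
          abel
        · have e1 : ⁅S 1 (m+3), S (n+1) (n+2)⁆ = 0 := by
            rw [hSS, hSE, hSE]
            split_ifs <;> try omega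
            abel
          rw [e1, lie_zero]
  -- summability
  have hnormE : ∀ i j, ‖E i j‖ ≤ 1 := by
    intro i j
    refine ContinuousLinearMap.opNorm_le_bound _ zero_le_one (fun x => ?_)
    rw [hE, norm_smul, e.orthonormal.1 i, mul_one, one_mul]
    calc ‖(inner ℝ x (e j) : ℝ)‖ = |(inner ℝ x (e j) : ℝ)| := rfl
    _ ≤ ‖x‖ * ‖e j‖ := abs_real_inner_le_norm _ _
    _ = ‖x‖ := by rw [e.orthonormal.1 j, mul_one]
  have hnormS : ∀ i j, ‖S i j‖ ≤ 2 := by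
    intro i j
    rw [hS]
    calc ‖E i j + E j i‖ ≤ ‖E i j‖ + ‖E j i‖ := norm_add_le _ _
    _ ≤ 2 := by linarith [hnormE i j, hnormE j i]
  set c : ℕ → ℝ := fun n => 1 / ((n : ℝ) + 1) ^ 2 with hc
  have hcpos : ∀ n, 0 < c n := by
    intro n; positivity
  have hcs : Summable c := by
    have h := (Real.summable_one_div_nat_pow (p := 2)).mpr (by norm_num)
    have := (summable_nat_add_iff 1).mpr h
    simpa [hc] using this
  have hsum : Summable (fun n => c n • S (n+1) (n+2)) := by
    refine Summable.of_norm_bounded (g := fun n => 2 * c n) (hcs.mul_left 2) (fun n => ?_)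
    show ‖c n • S (n+1) (n+2)‖ ≤ 2 * c n
    calc ‖c n • S (n+1) (n+2)‖ ≤ ‖c n‖ * ‖S (n+1) (n+2)‖ := ContinuousLinearMap.opNorm_smul_le _ _
    _ ≤ ‖c n‖ * 2 := mul_le_mul_of_nonneg_left (hnormS _ _) (norm_nonneg _)
    _ = 2 * c n := by rw [Real.norm_eq_abs, abs_of_pos (hcpos n)]; ring
  -- bracket commutes with tsum
  have hlie : ∀ (X : H →L[ℝ] H) (g : ℕ → H →L[ℝ] H), Summable g →
      ⁅X, ∑' n, g n⁆ = ∑' n, ⁅X, g n⁆ ∧ Summable (fun n => ⁅X, g n⁆) := by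
    intro X g hg
    have h1 : Summable (fun n => X * g n) := hg.mul_left X
    have h2 : Summable (fun n => g n * X) := hg.mul_right X
    constructor
    · simp only [Ring.lie_def]
      rw [h1.tsum_sub h2, hg.tsum_mul_left X, hg.tsum_mul_right X]
    · simp only [Ring.lie_def]
      exact h1.sub h2
  -- double bracket with w as tsum
  have hdbl : ∀ X : H →L[ℝ] H,
      ⁅S 1 1, ⁅X, w⁆⁆ = ∑' n, c n • ⁅S 1 1, ⁅X, S (n+1) (n+2)⁆⁆ := by
    intro X
    rw [hw]
    obtain ⟨h1, h1s⟩ := hlie X _ hsum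
    rw [h1]
    obtain ⟨h2, _⟩ := hlie (S 1 1) _ h1s
    rw [h2]
    congr 1
    funext n
    rw [lie_smul, lie_smul]
  -- the three identities
  have I1 : ⁅v, ⁅v, w⁆⁆ = (4:ℝ) • S 1 2 := by
    rw [hv, hdbl]
    rw [tsum_eq_single 0 (fun n hn => by rw [P1 n, if_neg hn, smul_zero])]
    rw [P1 0, if_pos rfl]
    norm_num [hc]
  have I2 : ⁅v, ⁅S 1 2, w⁆⁆ = (2 * c 1) • S 1 3 := by
    rw [hv, hdbl]
    rw [tsum_eq_single 1 (fun n hn => by rw [P2 n, if_neg hn, smul_zero])]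
    rw [P2 1, if_pos rfl, smul_smul, mul_comm]
  have I3 : ∀ m : ℕ, ⁅v, ⁅S 1 (m+3), w⁆⁆ =
      (2 * c (m+2)) • S 1 (m+4) + (2 * c (m+1)) • S 1 (m+2) := by
    intro m
    rw [hv, hdbl]
    rw [tsum_eq_sum (s := {m+1, m+2}) (f := fun n => c n • ⁅S 1 1, ⁅S 1 (m+3), S (n+1) (n+2)⁆⁆)
      (fun n hn => ?_)]
    · rw [Finset.sum_pair (by omega)]
      rw [P3 m (m+1), P3 m (m+2), if_pos rfl, if_neg (by omega), if_pos rfl]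
      rw [smul_smul, smul_smul]
      ring_nf
      abel
    · simp only [Finset.mem_insert, Finset.mem_singleton, not_or] at hn
      simp only [P3 m n, if_neg hn.2, if_neg hn.1, smul_zero]
  -- membership
  set L := LieSubalgebra.lieSpan ℝ (H →L[ℝ] H) {v, w} with hL
  have hvL : v ∈ L := LieSubalgebra.subset_lieSpan (by simp)
  have hwL : w ∈ L := LieSubalgebra.subset_lieSpan (by simp)
  have main : ∀ m : ℕ, S 1 (m+1) ∈ L ∧ S 1 (m+2) ∈ L := by
    intro m
    induction m with
    | zero =>
      constructor
      · rw [← hv]; exact hvL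
      · have : S 1 2 = (4:ℝ)⁻¹ • ⁅v, ⁅v, w⁆⁆ := by rw [I1, smul_smul]; norm_num
        rw [this]
        exact L.smul_mem _ (L.lie_mem hvL (L.lie_mem hvL hwL))
    | succ m ih =>
      refine ⟨ih.2, ?_⟩
      match m with
      | 0 =>
        have hne : (2 * c 1) ≠ 0 := by positivity
        have : S 1 3 = (2 * c 1)⁻¹ • ⁅v, ⁅S 1 2, w⁆⁆ := by
          rw [I2, smul_smul, inv_mul_cancel₀ hne, one_smul]
        rw [show (0:ℕ)+1+2 = 3 by norm_num, this]
        exact L.smul_mem _ (L.lie_mem hvL (L.lie_mem ih.2 hwL))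
      | Nat.succ m' =>
        have hne : (2 * c (m'+2)) ≠ 0 := by positivity
        have hmem : ⁅v, ⁅S 1 (m'+3), w⁆⁆ ∈ L :=
          L.lie_mem hvL (L.lie_mem (by simpa using ih.2) hwL)
        have hx : S 1 (m'+4) = (2 * c (m'+2))⁻¹ •
            (⁅v, ⁅S 1 (m'+3), w⁆⁆ - (2 * c (m'+1)) • S 1 (m'+2)) := by
          rw [I3 m', add_sub_cancel_right, smul_smul, inv_mul_cancel₀ hne, one_smul]
        have : S 1 (m'+4) ∈ L := by
          rw [hx]
          exact L.smul_mem _ (L.toSubmodule.sub_mem hmem (L.smul_mem _ (by simpa using ih.1)))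
        simpa [show m' + 1 + 1 + 2 = m' + 4 by omega] using this
  refine ⟨fun k hk => ?_, ?_⟩
  · obtain ⟨m, rfl⟩ : ∃ m, k = m + 1 := ⟨k - 1, by omega⟩
    exact (main m).1
  · intro hfin
    -- evaluation map at e 1
    have heval : ∀ k : ℕ, S 1 (k+2) (e 1) = e (k+2) := by
      intro k
      rw [hS]
      simp only [ContinuousLinearMap.add_apply, hE]
      rw [horth, horth]
      rw [if_neg (by omega), if_pos rfl]
      simp
    set φ : (H →L[ℝ] H) →ₗ[ℝ] H :=
      { toFun := fun T => T (e 1)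
        map_add' := by intros; simp
        map_smul' := by intros; simp } with hφ
    have li_e : LinearIndependent ℝ (fun k : ℕ => e (k+2)) :=
      e.orthonormal.linearIndependent.comp (fun k => k+2) (fun a b hab => by simp only [] at hab; omega)
    have li_S : LinearIndependent ℝ (fun k : ℕ => S 1 (k+2)) := by
      apply LinearIndependent.of_comp φ
      have : (φ ∘ fun k : ℕ => S 1 (k+2)) = fun k : ℕ => e (k+2) := by
        funext k; simp [hφ, heval k]
      rw [this]
      exact li_e
    set u : ℕ → L := fun k => ⟨S 1 (k+2), (main (k+1)).1⟩ with hu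
    have li_u : LinearIndependent ℝ u := by
      apply LinearIndependent.of_comp (L.toSubmodule.subtype)
      exact li_S
    exact Module.Finite.not_linearIndependent_of_infinite u li_u
end

section
/- Let H be a real Hilbert space with orthonormal basis (e_i)_{i∈ℕ} and quadratic form Q with Q(e_1)=Q(e_2)=1 and Q(e_i)=−1 for i≥3. Let x, y be the isotropic lines spanned by x̄ = e_1 + e_3 and ȳ = −e_1 + e_3. Then the set of isotropic lines z with Q(x̄, z̄) < 0 and Q(ȳ, z̄) < 0 (for a suitable representative z̄) and positive orientation condition is parametrized, via z̄ = u + v with u ∈ span(e_1,e_2), v ⊥ span(e_1,e_2), ‖u‖=‖v‖=1, by the set of pairs (u₁, v′) with |u₁|² + ‖v′‖² < 1 and v′ ⊥ e₃, which is a bounded convex subset of a Hilbert space. In particular the interval I_{x,y} is homeomorphic to a bounded convex subset of a Hilbert space. -/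
set_option maxHeartbeats 1000000 in
/-- On the real Hilbert space with orthonormal basis `(e_i)` and quadratic form `Q` of
signature `(2, ∞)` (positive on `e 0, e 1`, negative on the rest), with `x̄ = e 0 + e 2` and
`ȳ = −e 0 + e 2` spanning two isotropic lines, the interval `I_{x,y}` — realized as the set of
normalized isotropic representatives `w` with `Q(x̄,w) < 0`, `Q(ȳ,w) < 0` and positive
orientation `⟨w, e 1⟩ > 0` — is homeomorphic to the set
`{w : ⟨w,e 1⟩ = ⟨w,e 2⟩ = 0, ‖w‖ < 1}` (the pairs `(u₁, v′)` with `u₁² + ‖v′‖² < 1`),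
a bounded convex subset of a Hilbert space. -/
theorem stmt9 {H : Type*} [NormedAddCommGroup H] [InnerProductSpace ℝ H] [CompleteSpace H]
    (e : HilbertBasis ℕ ℝ H)
    (Q : H → H → ℝ)
    (hQ : ∀ a b : H, Q a b =
      2 * ((inner ℝ a (e 0) : ℝ) * (inner ℝ b (e 0) : ℝ) +
            (inner ℝ a (e 1) : ℝ) * (inner ℝ b (e 1) : ℝ)) - (inner ℝ a b : ℝ)) :
    let xbar : H := e 0 + e 2
    let ybar : H := -e 0 + e 2
    let I : Set H := {w | ‖w‖ ^ 2 = 2 ∧ Q w w = 0 ∧ Q xbar w < 0 ∧ Q ybar w < 0 ∧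
      0 < (inner ℝ w (e 1) : ℝ)}
    let s : Set H := {w | (inner ℝ w (e 1) : ℝ) = 0 ∧ (inner ℝ w (e 2) : ℝ) = 0 ∧ ‖w‖ < 1}
    Convex ℝ s ∧ Bornology.IsBounded s ∧ Nonempty (↥I ≃ₜ ↥s) := by
  intro xbar ybar I s
  have hee : ∀ i j : ℕ, (inner ℝ (e i) (e j) : ℝ) = if i = j then 1 else 0 :=
    fun i j => orthonormal_iff_ite.mp e.orthonormal i j
  -- convexity of s
  have hconv : Convex ℝ s := by
    intro a ha b hb p q hp hq hpq
    obtain ⟨ha1, ha2, ha3⟩ := ha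
    obtain ⟨hb1, hb2, hb3⟩ := hb
    refine ⟨?_, ?_, ?_⟩
    · simp [inner_add_left, real_inner_smul_left, ha1, hb1]
    · simp [inner_add_left, real_inner_smul_left, ha2, hb2]
    · have h := norm_add_le (p • a) (q • b)
      rw [norm_smul, norm_smul] at h
      simp only [Real.norm_eq_abs, abs_of_nonneg hp, abs_of_nonneg hq] at h
      rcases hp.lt_or_eq with h' | h'
      · nlinarith [norm_nonneg a, norm_nonneg b]
      · nlinarith [norm_nonneg a, norm_nonneg b]
  have hbdd : Bornology.IsBounded s := by
    apply (Metric.isBounded_ball (x := (0 : H)) (r := 1)).subset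
    intro w hw
    simpa [mem_ball_zero_iff] using hw.2.2
  refine ⟨hconv, hbdd, ?_⟩
  -- characterization of membership in I
  have hxw : ∀ w : H, (inner ℝ xbar w : ℝ) = (inner ℝ w (e 0) : ℝ) + (inner ℝ w (e 2) : ℝ) := by
    intro w
    simp only [xbar, inner_add_left]
    rw [real_inner_comm (e 0) w, real_inner_comm (e 2) w]
  have hyw : ∀ w : H, (inner ℝ ybar w : ℝ) = -(inner ℝ w (e 0) : ℝ) + (inner ℝ w (e 2) : ℝ) := by
    intro w
    simp only [ybar, inner_add_left, inner_neg_left]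
    rw [real_inner_comm (e 0) w, real_inner_comm (e 2) w]
  have hx0 : (inner ℝ xbar (e 0) : ℝ) = 1 := by simp [xbar, inner_add_left, hee, e.orthonormal.1 0]
  have hx1 : (inner ℝ xbar (e 1) : ℝ) = 0 := by simp [xbar, inner_add_left, hee]
  have hy0 : (inner ℝ ybar (e 0) : ℝ) = -1 := by
    simp [ybar, inner_add_left, inner_neg_left, hee, e.orthonormal.1 0]
  have hy1 : (inner ℝ ybar (e 1) : ℝ) = 0 := by
    simp [ybar, inner_add_left, inner_neg_left, hee]
  have hIiff : ∀ w : H, w ∈ I ↔ ‖w‖ ^ 2 = 2 ∧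
      (inner ℝ w (e 0) : ℝ) ^ 2 + (inner ℝ w (e 1) : ℝ) ^ 2 = 1 ∧
      (inner ℝ w (e 0) : ℝ) < (inner ℝ w (e 2) : ℝ) ∧
      -(inner ℝ w (e 2) : ℝ) < (inner ℝ w (e 0) : ℝ) ∧
      0 < (inner ℝ w (e 1) : ℝ) := by
    intro w
    simp only [I, Set.mem_setOf_eq, hQ, hxw w, hyw w, hx0, hx1, hy0, hy1,
      real_inner_self_eq_norm_sq]
    constructor
    · rintro ⟨h1, h2, h3, h4, h5⟩
      exact ⟨h1, by nlinarith, by nlinarith, by nlinarith, h5⟩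
    · rintro ⟨h1, h2, h3, h4, h5⟩
      exact ⟨h1, by nlinarith, by nlinarith, by nlinarith, h5⟩
  -- general expansion lemmas
  have hinn : ∀ (w : H) (b c : ℝ) (j : ℕ),
      (inner ℝ (w + b • e 1 + c • e 2) (e j) : ℝ)
        = (inner ℝ w (e j) : ℝ) + b * (inner ℝ (e 1) (e j) : ℝ) + c * (inner ℝ (e 2) (e j) : ℝ) := by
    intro w b c j
    simp [inner_add_left, real_inner_smul_left]
  have hnorm : ∀ (w : H) (b c : ℝ),
      ‖w + b • e 1 + c • e 2‖ ^ 2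
        = ‖w‖ ^ 2 + 2 * b * (inner ℝ w (e 1) : ℝ) + 2 * c * (inner ℝ w (e 2) : ℝ)
          + b ^ 2 + c ^ 2 := by
    intro w b c
    rw [← real_inner_self_eq_norm_sq, ← real_inner_self_eq_norm_sq]
    simp only [inner_add_left, inner_add_right, real_inner_smul_left, real_inner_smul_right, hee]
    rw [real_inner_comm (e 1) w, real_inner_comm (e 2) w]
    norm_num
    ring
  -- the two maps
  set F : H → H := fun w =>
    w + (-(inner ℝ w (e 1) : ℝ)) • e 1 + (-(inner ℝ w (e 2) : ℝ)) • e 2 with hFdef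
  set G : H → H := fun z =>
    z + Real.sqrt (1 - (inner ℝ z (e 0) : ℝ) ^ 2) • e 1
      + Real.sqrt (1 + (inner ℝ z (e 0) : ℝ) ^ 2 - ‖z‖ ^ 2) • e 2 with hGdef
  -- F maps I to s
  have hF0 : ∀ w : H, (inner ℝ (F w) (e 0) : ℝ) = (inner ℝ w (e 0) : ℝ) := by
    intro w; rw [hFdef]; simp only [hinn, hee]; norm_num
  have hF1 : ∀ w : H, (inner ℝ (F w) (e 1) : ℝ) = 0 := by
    intro w; rw [hFdef]; simp only [hinn, hee]; norm_num
  have hF2 : ∀ w : H, (inner ℝ (F w) (e 2) : ℝ) = 0 := by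
    intro w; rw [hFdef]; simp only [hinn, hee]; norm_num
  have hFn : ∀ w : H, ‖F w‖ ^ 2
      = ‖w‖ ^ 2 - (inner ℝ w (e 1) : ℝ) ^ 2 - (inner ℝ w (e 2) : ℝ) ^ 2 := by
    intro w; rw [hFdef]; simp only [hnorm]; ring
  have hFmem : ∀ w ∈ I, F w ∈ s := by
    intro w hw
    rw [hIiff] at hw
    obtain ⟨h1, h2, h3, h4, h5⟩ := hw
    refine ⟨hF1 w, hF2 w, ?_⟩
    have hsq : ‖F w‖ ^ 2 < 1 := by rw [hFn w]; nlinarith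
    have : ‖F w‖ ^ 2 < 1 ^ 2 := by simpa using hsq
    exact lt_of_pow_lt_pow_left₀ 2 zero_le_one this
  -- G maps s to I
  have hGmem : ∀ z ∈ s, G z ∈ I := by
    intro z hz
    obtain ⟨hz1, hz2, hz3⟩ := hz
    set c0 : ℝ := (inner ℝ z (e 0) : ℝ) with hc0
    have hcle : c0 ^ 2 ≤ ‖z‖ ^ 2 := by
      have h := abs_real_inner_le_norm z (e 0)
      have he0 : ‖e 0‖ = 1 := e.orthonormal.1 0
      rw [he0, mul_one] at h
      nlinarith [abs_nonneg (inner ℝ z (e 0) : ℝ), sq_abs (inner ℝ z (e 0) : ℝ)]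
    have hzn2 : ‖z‖ ^ 2 < 1 := by nlinarith [norm_nonneg z]
    have hr1 : 0 < 1 - c0 ^ 2 := by nlinarith
    have hr2 : 0 < 1 + c0 ^ 2 - ‖z‖ ^ 2 := by nlinarith
    set b1 : ℝ := Real.sqrt (1 - c0 ^ 2) with hb1
    set b2 : ℝ := Real.sqrt (1 + c0 ^ 2 - ‖z‖ ^ 2) with hb2
    have hb1sq : b1 ^ 2 = 1 - c0 ^ 2 := Real.sq_sqrt hr1.le
    have hb2sq : b2 ^ 2 = 1 + c0 ^ 2 - ‖z‖ ^ 2 := Real.sq_sqrt hr2.le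
    have hb1pos : 0 < b1 := Real.sqrt_pos.mpr hr1
    have hb2pos : 0 < b2 := Real.sqrt_pos.mpr hr2
    have hG0 : (inner ℝ (G z) (e 0) : ℝ) = c0 := by
      rw [hGdef]; simp only [hinn, hee]; norm_num; rfl
    have hG1 : (inner ℝ (G z) (e 1) : ℝ) = b1 := by
      rw [hGdef]; simp only [hinn, hee]; norm_num; linarith [hz1]
    have hG2 : (inner ℝ (G z) (e 2) : ℝ) = b2 := by
      rw [hGdef]; simp only [hinn, hee]; norm_num; linarith [hz2]
    have hGn : ‖G z‖ ^ 2 = 2 := by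
      rw [hGdef]; simp only [hnorm]
      rw [← hb1, ← hb2, hz1, hz2]
      nlinarith
    rw [hIiff]
    refine ⟨hGn, ?_, ?_, ?_, ?_⟩
    · rw [hG0, hG1]; nlinarith
    · rw [hG0, hG2]; nlinarith
    · rw [hG0, hG2]; nlinarith
    · rw [hG1]; exact hb1pos
  -- G ∘ F = id on I
  have hGF : ∀ w ∈ I, G (F w) = w := by
    intro w hw
    rw [hIiff] at hw
    obtain ⟨h1, h2, h3, h4, h5⟩ := hw
    have hr1 : 1 - (inner ℝ (F w) (e 0) : ℝ) ^ 2 = (inner ℝ w (e 1) : ℝ) ^ 2 := by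
      rw [hF0]; nlinarith
    have hr2 : 1 + (inner ℝ (F w) (e 0) : ℝ) ^ 2 - ‖F w‖ ^ 2 = (inner ℝ w (e 2) : ℝ) ^ 2 := by
      rw [hF0, hFn]; nlinarith
    rw [hGdef]
    simp only [hr1, hr2]
    rw [Real.sqrt_sq h5.le, Real.sqrt_sq (by nlinarith : (0:ℝ) ≤ (inner ℝ w (e 2) : ℝ))]
    rw [hFdef]
    simp only [neg_smul]
    abel
  -- F ∘ G = id on s
  have hFG : ∀ z ∈ s, F (G z) = z := by
    intro z hz
    obtain ⟨hz1, hz2, hz3⟩ := hz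
    have hG1 : (inner ℝ (G z) (e 1) : ℝ) = Real.sqrt (1 - (inner ℝ z (e 0) : ℝ) ^ 2) := by
      rw [hGdef]; simp only [hinn, hee]; norm_num; linarith [hz1]
    have hG2 : (inner ℝ (G z) (e 2) : ℝ)
        = Real.sqrt (1 + (inner ℝ z (e 0) : ℝ) ^ 2 - ‖z‖ ^ 2) := by
      rw [hGdef]; simp only [hinn, hee]; norm_num; linarith [hz2]
    rw [hFdef]
    simp only [hG1, hG2]
    rw [hGdef]
    simp only [neg_smul]
    abel
  -- continuity
  have hFcont : Continuous F := by
    rw [hFdef]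
    exact ((continuous_id.add
      (((continuous_id.inner continuous_const).neg).smul continuous_const)).add
      (((continuous_id.inner continuous_const).neg).smul continuous_const))
  have hGcont : Continuous G := by
    rw [hGdef]
    refine (continuous_id.add ?_).add ?_
    · exact (Real.continuous_sqrt.comp
        (continuous_const.sub ((continuous_id.inner continuous_const).pow 2))).smul
        continuous_const
    · exact (Real.continuous_sqrt.comp
        ((continuous_const.add ((continuous_id.inner continuous_const).pow 2)).sub
          (continuous_norm.pow 2))).smul continuous_const
  exact ⟨{
    toFun := fun w => ⟨F w, hFmem w w.2⟩
    invFun := fun z => ⟨G z, hGmem z z.2⟩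
    left_inv := fun w => Subtype.ext (by
      have : G (F w) = w := hGF w w.2
      simpa using this)
    right_inv := fun z => Subtype.ext (by
      have : F (G z) = z := hFG z z.2
      simpa using this)
    continuous_toFun := (hFcont.comp continuous_subtype_val).subtype_mk _
    continuous_invFun := (hGcont.comp continuous_subtype_val).subtype_mk _ }⟩
end

section
/- Let H be a real Hilbert space with a quadratic form Q of signature (2, ∞) as above, and let b, c be the isotropic lines spanned by e₁ + e₃ and −e₁ + e₃. Suppose a, d, t are isotropic lines with representatives ā = (cos θ_a, sin θ_a, v_a, w_a), d̄ = (cos θ_d, sin θ_d, v_d, w_d), t̄ = (cos θ_t, sin θ_t, v_t, w_t) (coordinates with respect to e₁, e₂, e₃ and the rest), satisfying ‖w_a‖² + v_a² = ‖w_d‖² + v_d² = ‖w_t‖² + v_t² = 1, with −π ≤ θ_d < θ_a ≤ 0, v_a > |cos θ_a|, v_d > |cos θ_d|, 0 ≤ θ_t ≤ π, v_t ≥ |cos θ_t|. Then Q(ā, t̄) < 0 and Q(d̄, t̄) < 0. (This proves that the closure of the interval I_{b,c} is contained in the open interval I_{a,d}.) -/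
lemma key10 {E : Type*} [NormedAddCommGroup E] [InnerProductSpace ℝ E]
    (θa θt va vt : ℝ) (wa wt : E)
    (ha : ‖wa‖ ^ 2 + va ^ 2 = 1) (ht : ‖wt‖ ^ 2 + vt ^ 2 = 1)
    (hθa1 : -Real.pi ≤ θa) (hθa : θa ≤ 0)
    (hva : |Real.cos θa| < va)
    (hθt0 : 0 ≤ θt) (hθtπ : θt ≤ Real.pi) (hvt : |Real.cos θt| ≤ vt) :
    Real.cos θa * Real.cos θt + Real.sin θa * Real.sin θt - va * vt - (inner ℝ wa wt : ℝ) < 0 := by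
  have hsa : Real.sin θa ≤ 0 := by
    have := Real.sin_nonneg_of_nonneg_of_le_pi (x := -θa) (by linarith) (by linarith)
    rw [Real.sin_neg] at this; linarith
  have hst : 0 ≤ Real.sin θt := Real.sin_nonneg_of_nonneg_of_le_pi hθt0 hθtπ
  have pa : Real.sin θa ^ 2 + Real.cos θa ^ 2 = 1 := Real.sin_sq_add_cos_sq θa
  have pt : Real.sin θt ^ 2 + Real.cos θt ^ 2 = 1 := Real.sin_sq_add_cos_sq θt
  have hna : (0:ℝ) ≤ ‖wa‖ := norm_nonneg _
  have hnt : (0:ℝ) ≤ ‖wt‖ := norm_nonneg _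
  have hi : |(inner ℝ wa wt : ℝ)| ≤ ‖wa‖ * ‖wt‖ := abs_real_inner_le_norm wa wt
  have hi' : -(‖wa‖ * ‖wt‖) ≤ (inner ℝ wa wt : ℝ) := neg_le_of_abs_le hi
  have hca : |Real.cos θa| ^ 2 = Real.cos θa ^ 2 := sq_abs _
  have hct : |Real.cos θt| ^ 2 = Real.cos θt ^ 2 := sq_abs _
  have hca0 : (0:ℝ) ≤ |Real.cos θa| := abs_nonneg _
  have hct0 : (0:ℝ) ≤ |Real.cos θt| := abs_nonneg _
  have hcale : Real.cos θa ≤ |Real.cos θa| := le_abs_self _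
  have hcale' : -Real.cos θa ≤ |Real.cos θa| := neg_le_abs _
  have hctle : Real.cos θt ≤ |Real.cos θt| := le_abs_self _
  have hctle' : -Real.cos θt ≤ |Real.cos θt| := neg_le_abs _
  have hva0 : 0 < va := lt_of_le_of_lt hca0 hva
  have hvt0 : 0 ≤ vt := le_trans hct0 hvt
  -- ‖wa‖ < -sin θa
  have h1 : ‖wa‖ ^ 2 < Real.sin θa ^ 2 := by nlinarith
  have h1' : ‖wa‖ ^ 2 < (-Real.sin θa) ^ 2 := by
    rw [show (-Real.sin θa) ^ 2 = Real.sin θa ^ 2 by ring]; exact h1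
  have h2 : ‖wa‖ < -Real.sin θa := lt_of_pow_lt_pow_left₀ 2 (by linarith) h1'
  -- ‖wt‖ ≤ sin θt
  have h3 : ‖wt‖ ^ 2 ≤ Real.sin θt ^ 2 := by nlinarith
  have h4 : ‖wt‖ ≤ Real.sin θt := le_of_pow_le_pow_left₀ (by norm_num) hst h3
  -- cos part ≤ 0
  have hcos : Real.cos θa * Real.cos θt ≤ |Real.cos θa| * |Real.cos θt| := by
    calc Real.cos θa * Real.cos θt ≤ |Real.cos θa * Real.cos θt| := le_abs_self _
    _ = |Real.cos θa| * |Real.cos θt| := abs_mul _ _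
  rcases eq_or_lt_of_le hst with hst0 | hstpos
  · -- sin θt = 0, so ‖wt‖ = 0, vt ≥ 1
    rw [← hst0] at h3 pt
    have hwt0 : ‖wt‖ = 0 := by
      have h0 : ‖wt‖ ^ 2 = 0 := le_antisymm (by simpa using h3) (sq_nonneg _)
      exact (pow_eq_zero_iff two_ne_zero).mp h0
    have hinner0 : (inner ℝ wa wt : ℝ) = 0 := by
      rw [hwt0, mul_zero] at hi
      exact abs_nonpos_iff.mp hi
    have hct2 : Real.cos θt ^ 2 = 1 := by linear_combination pt
    have hfac : (Real.cos θt - 1) * (Real.cos θt + 1) = 0 := by linear_combination hct2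
    have hct1 : |Real.cos θt| = 1 := by
      rcases mul_eq_zero.mp hfac with h | h
      · rw [show Real.cos θt = 1 by linarith]; simp
      · rw [show Real.cos θt = -1 by linarith]; simp
    have hvt1 : (1:ℝ) ≤ vt := hct1 ▸ hvt
    have hvavt : va ≤ va * vt := le_mul_of_one_le_right hva0.le hvt1
    have hcc : Real.cos θa * Real.cos θt ≤ |Real.cos θa| := by
      rw [← mul_one |Real.cos θa|, ← hct1]; exact hcos
    rw [← hst0, hinner0]
    linarith
  · -- sin θt > 0
    have hcos2 : |Real.cos θa| * |Real.cos θt| ≤ va * vt :=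
      mul_le_mul (le_of_lt hva) hvt hct0 (le_of_lt hva0)
    have hsin : ‖wa‖ * ‖wt‖ < -(Real.sin θa * Real.sin θt) := by
      calc ‖wa‖ * ‖wt‖ ≤ ‖wa‖ * Real.sin θt := mul_le_mul_of_nonneg_left h4 hna
        _ < (-Real.sin θa) * Real.sin θt := mul_lt_mul_of_pos_right h2 hstpos
        _ = -(Real.sin θa * Real.sin θt) := by ring
    linarith

/-- Nesting of intervals in the boundary of `X_ℝ(2,∞)`: with coordinates as in the statement
(components along `e₁, e₂, e₃` and the orthogonal rest), if the isotropic representatives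
`ā, d̄, t̄` satisfy the listed normalization, angle and positivity conditions, then
`Q(ā, t̄) < 0` and `Q(d̄, t̄) < 0`. -/
theorem stmt10 {E : Type*} [NormedAddCommGroup E] [InnerProductSpace ℝ E]
    (θa θd θt va vd vt : ℝ) (wa wd wt : E)
    (ha : ‖wa‖ ^ 2 + va ^ 2 = 1) (hd : ‖wd‖ ^ 2 + vd ^ 2 = 1) (ht : ‖wt‖ ^ 2 + vt ^ 2 = 1)
    (hθd : -Real.pi ≤ θd) (hθda : θd < θa) (hθa : θa ≤ 0)
    (hva : |Real.cos θa| < va) (hvd : |Real.cos θd| < vd)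
    (hθt0 : 0 ≤ θt) (hθtπ : θt ≤ Real.pi) (hvt : |Real.cos θt| ≤ vt) :
    Real.cos θa * Real.cos θt + Real.sin θa * Real.sin θt - va * vt - (inner ℝ wa wt : ℝ) < 0 ∧
      Real.cos θd * Real.cos θt + Real.sin θd * Real.sin θt - vd * vt - (inner ℝ wd wt : ℝ) < 0 := by
  exact ⟨key10 θa θt va vt wa wt ha ht (by linarith) hθa hva hθt0 hθtπ hvt,
         key10 θd θt vd vt wd wt hd ht hθd (by linarith) hvd hθt0 hθtπ hvt⟩
end

section
/- Let g be a bounded invertible operator on a real Hilbert space H with two one-dimensional eigenspaces spanned by ḡ⁺ and ḡ⁻ with real eigenvalues λ and λ⁻¹ where λ > 1, and suppose all other spectral values have absolute value at most μ < λ. Let w̄ = w⁺ḡ⁺ + w⁻ḡ⁻ + w₀ with w⁺ ≠ 0 and w₀ in the closed invariant complement of span(ḡ⁺, ḡ⁻). Then gⁿw̄/‖gⁿw̄‖ converges to ḡ⁺/‖ḡ⁺‖ (up to sign, and exactly if λ > 0) as n → ∞. -/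
/-- Let `g ∈ GL(H)` have eigenvectors `ḡ⁺, ḡ⁻` with eigenvalues `λ > 1` and `λ⁻¹`, and let
`H₀` be a closed invariant complement on which the iterates of `g` grow at most like `μⁿ`
with `μ < λ`. If `w̄ = w⁺ḡ⁺ + w⁻ḡ⁻ + w₀` with `w⁺ ≠ 0` and `w₀ ∈ H₀`, then
`gⁿw̄/‖gⁿw̄‖` converges (up to sign) to `ḡ⁺/‖ḡ⁺‖`. -/
theorem stmt11 {H : Type*} [NormedAddCommGroup H] [InnerProductSpace ℝ H] [CompleteSpace H]
    (g : (H →L[ℝ] H)ˣ) (gp gm : H) (lam mu : ℝ)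
    (hgp : (g : H →L[ℝ] H) gp = lam • gp) (hgm : (g : H →L[ℝ] H) gm = lam⁻¹ • gm)
    (hgp0 : gp ≠ 0) (hlam : 1 < lam)
    (H₀ : Submodule ℝ H) (hH₀closed : IsClosed (H₀ : Set H))
    (hspan : (Submodule.span ℝ {gp, gm}) ⊔ H₀ = ⊤)
    (hindep : (Submodule.span ℝ {gp, gm}) ⊓ H₀ = ⊥)
    (hinv : ∀ x ∈ H₀, (g : H →L[ℝ] H) x ∈ H₀)
    (hmu0 : 0 ≤ mu) (hmulam : mu < lam)
    (hbound : ∀ n : ℕ, ∀ x ∈ H₀, ‖((g : H →L[ℝ] H) ^ n) x‖ ≤ mu ^ n * ‖x‖)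
    (wp wm : ℝ) (w₀ w : H) (hw₀ : w₀ ∈ H₀) (hwp : wp ≠ 0)
    (hw : w = wp • gp + wm • gm + w₀) :
    ∃ ε : ℝ, (ε = 1 ∨ ε = -1) ∧
      Filter.Tendsto (fun n : ℕ => ‖((g : H →L[ℝ] H) ^ n) w‖⁻¹ • ((g : H →L[ℝ] H) ^ n) w)
        Filter.atTop (nhds (ε • ‖gp‖⁻¹ • gp)) := by
  set T : H →L[ℝ] H := (g : H →L[ℝ] H) with hT
  have hlam0 : (0:ℝ) < lam := zero_lt_one.trans hlam
  have hlamn : ∀ n : ℕ, (0:ℝ) < lam ^ n := fun n => pow_pos hlam0 n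
  have hTp : ∀ n : ℕ, (T ^ n) gp = lam ^ n • gp := by
    intro n; induction n with
    | zero => simp
    | succ n ih =>
      rw [pow_succ, ContinuousLinearMap.mul_apply, hgp, map_smul, ih, smul_smul, ← pow_succ']
  have hTm : ∀ n : ℕ, (T ^ n) gm = (lam⁻¹) ^ n • gm := by
    intro n; induction n with
    | zero => simp
    | succ n ih =>
      rw [pow_succ, ContinuousLinearMap.mul_apply, hgm, map_smul, ih, smul_smul, ← pow_succ']
  set u : ℕ → H := fun n => (lam ^ n)⁻¹ • (T ^ n) w with hu
  have hun : ∀ n, u n = wp • gp + ((lam⁻¹ * lam⁻¹) ^ n * wm) • gm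
      + (lam ^ n)⁻¹ • (T ^ n) w₀ := by
    intro n
    have hne : lam ^ n ≠ 0 := (hlamn n).ne'
    simp only [hu, hw, map_add, map_smul, hTp, hTm, smul_add, smul_smul]
    congr 2
    · congr 1
      field_simp
    · congr 1
      rw [mul_pow, ← inv_pow]
      ring
  have h1 : Filter.Tendsto (fun n : ℕ => ((lam⁻¹ * lam⁻¹) ^ n * wm) • gm)
      Filter.atTop (nhds 0) := by
    have hr : |lam⁻¹ * lam⁻¹| < 1 := by
      rw [abs_of_pos (by positivity)]
      have h1 : lam⁻¹ < 1 := inv_lt_one_of_one_lt₀ hlam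
      nlinarith [inv_pos.2 hlam0]
    have := (tendsto_pow_atTop_nhds_zero_of_abs_lt_one hr).mul_const wm
    simpa using this.smul_const gm
  have h2 : Filter.Tendsto (fun n : ℕ => (lam ^ n)⁻¹ • (T ^ n) w₀)
      Filter.atTop (nhds 0) := by
    have hbd : ∀ n : ℕ, ‖(lam ^ n)⁻¹ • (T ^ n) w₀‖ ≤ (mu / lam) ^ n * ‖w₀‖ := by
      intro n
      rw [norm_smul, norm_inv, Real.norm_eq_abs, abs_of_pos (hlamn n), div_pow]
      calc (lam ^ n)⁻¹ * ‖(T ^ n) w₀‖ ≤ (lam ^ n)⁻¹ * (mu ^ n * ‖w₀‖) := by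
            exact mul_le_mul_of_nonneg_left (hbound n w₀ hw₀) (by positivity)
        _ = mu ^ n / lam ^ n * ‖w₀‖ := by ring
    have htend : Filter.Tendsto (fun n : ℕ => (mu / lam) ^ n * ‖w₀‖)
        Filter.atTop (nhds 0) := by
      have := (tendsto_pow_atTop_nhds_zero_of_lt_one (by positivity)
        ((div_lt_one hlam0).2 hmulam)).mul_const ‖w₀‖
      simpa using this
    exact squeeze_zero_norm hbd htend
  have hulim : Filter.Tendsto u Filter.atTop (nhds (wp • gp)) := by
    have := (tendsto_const_nhds (x := wp • gp) (f := Filter.atTop (α := ℕ))).add h1 |>.add h2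
    simpa only [add_zero] using this.congr fun n => (hun n).symm
  have hne : wp • gp ≠ 0 := smul_ne_zero hwp hgp0
  have hcont : ContinuousAt (fun x : H => ‖x‖⁻¹ • x) (wp • gp) :=
    ((continuousAt_id.norm).inv₀ (norm_ne_zero_iff.2 hne)).smul continuousAt_id
  have hlim2 : Filter.Tendsto (fun n => ‖u n‖⁻¹ • u n) Filter.atTop
      (nhds (‖wp • gp‖⁻¹ • (wp • gp))) := hcont.tendsto.comp hulim
  have heq : ∀ n : ℕ, ‖(T ^ n) w‖⁻¹ • (T ^ n) w = ‖u n‖⁻¹ • u n := by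
    intro n
    have hne' : lam ^ n ≠ 0 := (hlamn n).ne'
    have hTw : (T ^ n) w = lam ^ n • u n := by
      rw [hu]; simp [smul_smul, mul_inv_cancel₀ hne']
    rw [hTw, norm_smul, Real.norm_eq_abs, abs_of_pos (hlamn n), smul_smul]
    congr 1
    rw [mul_inv]
    field_simp
  refine ⟨if 0 < wp then 1 else -1, by split <;> simp, ?_⟩
  have hfinal : ‖wp • gp‖⁻¹ • (wp • gp) = (if 0 < wp then (1:ℝ) else -1) • ‖gp‖⁻¹ • gp := by
    have hg0 : ‖gp‖ ≠ 0 := norm_ne_zero_iff.2 hgp0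
    rw [norm_smul, Real.norm_eq_abs, smul_smul, smul_smul]
    congr 1
    rcases lt_or_gt_of_ne hwp with h | h
    · rw [if_neg (not_lt.2 h.le), abs_of_neg h]
      field_simp
    · rw [if_pos h, abs_of_pos h]
      field_simp
  rw [← hfinal]
  exact hlim2.congr fun n => (heq n).symm
end
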